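/- For every integer n ≥ 2 and every monic real polynomial q of degree 2n-2, one has sup_{t ∈ [-1,1]} |(1-t²) q(t)| ≥ 2^{1-2n} / cos^{2n}(π/(4n)). Moreover, the function t ↦ -2^{1-2n} cos^{-2n}(π/(4n)) · T_{2n}(cos(π/(4n)) t), where T_{2n} is the Chebyshev polynomial of the first kind of degree 2n, equals (1-t²) q₀(t) for some monic polynomial q₀ of degree 2n-2, and its supremum norm on [-1,1] equals exactly 2^{1-2n} / cos^{2n}(π/(4n)). -/

import Mathlib

open Polynomial Real

namespace ConstrainedCheb

lemma cheb_aux : ∀ k : ℕ, (Chebyshev.T ℝ k).natDegree = k ∧ (Chebyshev.T ℝ k).coeff k = 2 ^ (k - 1)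
  | 0 => by simp
  | 1 => by simp
  | (k + 2) => by
    obtain ⟨hd1, hc1⟩ := cheb_aux (k + 1)
    obtain ⟨hd0, hc0⟩ := cheb_aux k
    rw [show ((k + 1 : ℕ) : ℤ) = (k : ℤ) + 1 by push_cast; ring] at hd1 hc1
    have heq : Chebyshev.T ℝ (↑(k + 2) : ℤ) = 2 * (X * Chebyshev.T ℝ ((k : ℤ) + 1)) - Chebyshev.T ℝ k := by
      push_cast
      rw [Chebyshev.T_add_two ℝ k]; ring
    have hco : (Chebyshev.T ℝ (↑(k + 2) : ℤ)).coeff (k + 2) = 2 ^ (k + 1) := by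
      rw [heq, coeff_sub, coeff_eq_zero_of_natDegree_lt (p := Chebyshev.T ℝ (k:ℤ)) (by rw [hd0]; omega), sub_zero,
        coeff_ofNat_mul, coeff_X_mul, hc1]
      norm_num; ring
    have hle : (Chebyshev.T ℝ (↑(k + 2) : ℤ)).natDegree ≤ k + 2 := by
      rw [heq]
      refine le_trans (natDegree_sub_le _ _) (max_le ?_ (by rw [hd0]; omega))
      refine le_trans natDegree_mul_le ?_
      have h1 : (X * Chebyshev.T ℝ ((k:ℤ) + 1)).natDegree ≤ k + 2 :=
        le_trans natDegree_mul_le (by rw [hd1, natDegree_X]; omega)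
      have h2 : (2 : ℝ[X]).natDegree = 0 := natDegree_ofNat 2
      omega
    have hne : (Chebyshev.T ℝ (↑(k + 2) : ℤ)).coeff (k + 2) ≠ 0 := by
      rw [hco]; positivity
    exact ⟨le_antisymm hle (le_natDegree_of_ne_zero hne), by simpa using hco⟩

lemma cheb_natDegree (k : ℕ) : (Chebyshev.T ℝ k).natDegree = k := (cheb_aux k).1
lemma cheb_leadingCoeff (k : ℕ) : (Chebyshev.T ℝ k).leadingCoeff = 2 ^ (k - 1) := by
  rw [leadingCoeff, cheb_natDegree]; exact (cheb_aux k).2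


noncomputable def ch (n : ℕ) : ℝ := Real.cos (π / (4*n))
noncomputable def Mc (n : ℕ) : ℝ := (2:ℝ)^(1-2*(n:ℤ)) / ch n ^ (2*n)
noncomputable def Pc (n : ℕ) : ℝ[X] := C (-(Mc n)) * (Chebyshev.T ℝ (2*(n:ℤ))).comp (C (ch n) * X)

lemma angle_mem {n : ℕ} (hn : 1 ≤ n) : 0 < π/(4*n) ∧ π/(4*n) < π/2 := by
  have hπ := Real.pi_pos
  have h4 : (0:ℝ) < 4 * n := by positivity
  constructor
  · positivity
  · have hn' : (1:ℝ) ≤ n := by exact_mod_cast hn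
    rw [div_lt_div_iff₀ h4 two_pos]
    nlinarith

lemma ch_pos {n : ℕ} (hn : 1 ≤ n) : 0 < ch n := by
  obtain ⟨h1, h2⟩ := angle_mem hn
  exact Real.cos_pos_of_mem_Ioo ⟨by linarith, h2⟩

lemma ch_lt_one {n : ℕ} (hn : 1 ≤ n) : ch n < 1 := by
  obtain ⟨h1, h2⟩ := angle_mem hn
  have hπ := Real.pi_pos
  have := Real.cos_lt_cos_of_nonneg_of_le_pi le_rfl (by linarith) h1
  simpa [ch] using this

lemma Mc_pos {n : ℕ} (hn : 1 ≤ n) : 0 < Mc n := by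
  have := ch_pos hn; unfold Mc; positivity

lemma Pc_eval {n : ℕ} (t : ℝ) :
    (Pc n).eval t = -(Mc n) * (Chebyshev.T ℝ (2*(n:ℤ))).eval (ch n * t) := by
  simp [Pc, eval_comp]

lemma cast_2n (n : ℕ) : (2*(n:ℤ)) = ((2*n : ℕ) : ℤ) := by push_cast; ring

lemma Pc_natDegree {n : ℕ} (hn : 1 ≤ n) : (Pc n).natDegree = 2*n := by
  have hc := ch_pos hn
  have hM := Mc_pos hn
  have hlin : (C (ch n) * X : ℝ[X]).natDegree = 1 := by
    rw [natDegree_C_mul (by positivity), natDegree_X]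
  rw [Pc, natDegree_C_mul (neg_ne_zero.mpr (ne_of_gt hM)), natDegree_comp, hlin, cast_2n,
    cheb_natDegree, mul_one]
lemma Pc_leadingCoeff {n : ℕ} (hn : 1 ≤ n) : (Pc n).leadingCoeff = -1 := by
  have hc := ch_pos hn
  have hM := Mc_pos hn
  have hlin : (C (ch n) * X : ℝ[X]).natDegree = 1 := by
    rw [natDegree_C_mul (by positivity), natDegree_X]
  have hlc : (C (ch n) * X : ℝ[X]).leadingCoeff = ch n := by
    rw [leadingCoeff_mul, leadingCoeff_X, leadingCoeff_C, mul_one]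
  rw [Pc, leadingCoeff_mul, leadingCoeff_C, leadingCoeff_comp (by rw [hlin]; omega), hlc,
    cast_2n, cheb_leadingCoeff, cheb_natDegree]
  have hpow : (2:ℝ)^(1-2*(n:ℤ)) = ((2:ℝ) ^ (2*n-1 : ℕ))⁻¹ := by
    rw [← zpow_natCast, ← zpow_neg]
    congr 1
    push_cast [Nat.cast_sub (by omega : 1 ≤ 2*n)]
    ring
  have hcn : (ch n) ^ (2*n) ≠ 0 := by positivity
  field_simp [Mc, hpow]
  unfold Mc; rw [hpow]; field_simp

lemma two_n_theta {n : ℕ} (hn : 1 ≤ n) : (2*(n:ℤ) : ℝ) * (π/(4*n)) = π/2 := by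
  have hn0 : (n:ℝ) ≠ 0 := by positivity
  push_cast
  field_simp
  ring

lemma Pc_root_one {n : ℕ} (hn : 1 ≤ n) : (Pc n).eval 1 = 0 := by
  rw [Pc_eval, mul_one]
  have : ch n = Real.cos (π/(4*n)) := rfl
  rw [this, Chebyshev.T_real_cos]
  push_cast
  rw [show (2*(n:ℝ)) * (π/(4*n)) = π/2 by exact_mod_cast two_n_theta hn]
  simp

lemma Pc_root_neg_one {n : ℕ} (hn : 1 ≤ n) : (Pc n).eval (-1) = 0 := by
  rw [Pc_eval]
  have h1 : ch n * (-1) = Real.cos (π - π/(4*n)) := by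
    rw [Real.cos_pi_sub]; unfold ch; ring
  rw [h1, Chebyshev.T_real_cos]
  have h2 : 2*(n:ℝ) * (π - π/(4*(n:ℝ))) = (n:ℝ) * (2*π) - π/2 := by
    have := two_n_theta hn
    push_cast at this ⊢
    nlinarith [this]
  push_cast
  rw [h2]
  rw [show ((n:ℝ) * (2*π) - π/2) = ((n:ℕ) : ℝ) * (2*π) - π/2 by norm_num,
    Real.cos_nat_mul_two_pi_sub]
  simp

lemma Pc_factor {n : ℕ} (hn : 1 ≤ n) : ∃ q₀ : ℝ[X], Pc n = (1 - X^2) * q₀ := by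
  have h1 : (X - C (1:ℝ)) ∣ Pc n := (dvd_iff_isRoot).mpr (Pc_root_one hn)
  have h2 : (X - C (-1:ℝ)) ∣ Pc n := (dvd_iff_isRoot).mpr (Pc_root_neg_one hn)
  have hcop : IsCoprime (X - C (1:ℝ)) (X - C (-1:ℝ)) :=
    isCoprime_X_sub_C_of_isUnit_sub (by norm_num)
  obtain ⟨r, hr⟩ := hcop.mul_dvd h1 h2
  refine ⟨-r, ?_⟩
  rw [hr]; ring_nf; simp [C_1]; ring

lemma chdef (n : ℕ) : ch n = Real.cos (π/(4*n)) := rfl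

lemma abs_T_le_one (m : ℤ) {x : ℝ} (h1 : -1 ≤ x) (h2 : x ≤ 1) :
    |(Chebyshev.T ℝ m).eval x| ≤ 1 := by
  rw [← Real.cos_arccos h1 h2, Chebyshev.T_real_cos]
  exact Real.abs_cos_le_one _

lemma sup_greatest {n : ℕ} (hn : 1 ≤ n) (q₀ : ℝ[X]) (hfac : Pc n = (1 - X^2) * q₀) :
    IsGreatest ((fun t => |(1 - t ^ 2) * q₀.eval t|) '' Set.Icc (-1:ℝ) 1) (Mc n) := by
  have hc := ch_pos hn
  have hc1 := ch_lt_one hn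
  have hM := Mc_pos hn
  have hpt : ∀ u : ℝ, (1 - u^2) * q₀.eval u = (Pc n).eval u := by
    intro u
    rw [hfac]
    simp [eval_mul]
  constructor
  · refine ⟨0, by norm_num, ?_⟩
    simp only [hpt 0, Pc_eval]
    rw [mul_zero, show (0:ℝ) = Real.cos (π/2) from (Real.cos_pi_div_two).symm,
      Chebyshev.T_real_cos]
    push_cast
    rw [show 2*(n:ℝ)*(π/2) = (n:ℝ)*π by ring]
    rw [abs_mul, abs_neg, abs_of_pos hM]
    have habs : |Real.cos ((n:ℝ)*π)| = 1 := by
      have := Real.abs_cos_int_mul_pi (n:ℤ)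
      push_cast at this
      exact this
    rw [habs, mul_one]
  · rintro y ⟨u, hu, rfl⟩
    simp only [hpt u, Pc_eval]
    rw [abs_mul, abs_neg, abs_of_pos hM]
    have hb : |ch n * u| ≤ 1 := by
      rw [abs_mul, abs_of_pos hc]
      have hu1 : |u| ≤ 1 := abs_le.mpr ⟨hu.1, hu.2⟩
      nlinarith [abs_nonneg u]
    have hTb := abs_T_le_one (2*(n:ℤ)) (abs_le.mp hb).1 (abs_le.mp hb).2
    nlinarith [abs_nonneg ((Chebyshev.T ℝ (2*(n:ℤ))).eval (ch n * u))]


lemma one_sub_X2_natDegree : (1 - X^2 : ℝ[X]).natDegree = 2 := by compute_degree!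
lemma one_sub_X2_ne_zero : (1 - X^2 : ℝ[X]) ≠ 0 := fun h => by
  have := one_sub_X2_natDegree; rw [h] at this; simp at this
lemma one_sub_X2_leadingCoeff : (1 - X^2 : ℝ[X]).leadingCoeff = -1 := by
  rw [leadingCoeff, one_sub_X2_natDegree]
  simp [coeff_one]

lemma lower {n : ℕ} (hn : 2 ≤ n) (q : ℝ[X]) (hm : q.Monic) (hd : q.natDegree = 2*n-2) :
    Mc n ≤ sSup ((fun t => |(1 - t ^ 2) * q.eval t|) '' Set.Icc (-1:ℝ) 1) := by
  have hn1 : 1 ≤ n := by omega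
  have hc := ch_pos hn1
  have hc1 := ch_lt_one hn1
  have hM := Mc_pos hn1
  have hπ := Real.pi_pos
  have hnR : (1:ℝ) ≤ (n:ℝ) := by exact_mod_cast hn1
  set f : ℝ → ℝ := fun t => |(1 - t ^ 2) * q.eval t| with hf
  have hcont : Continuous f := ((continuous_const.sub (continuous_pow 2)).mul
    (q.continuous_aeval)).abs
  have hbdd : BddAbove (f '' Set.Icc (-1:ℝ) 1) := (isCompact_Icc.image hcont).bddAbove
  by_contra hcon
  push_neg at hcon
  have hfle : ∀ u ∈ Set.Icc (-1:ℝ) 1, f u < Mc n := fun u hu =>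
    lt_of_le_of_lt (le_csSup hbdd (Set.mem_image_of_mem f hu)) hcon
  set D : ℝ[X] := Pc n - (1 - X^2) * q with hD
  -- angles and nodes
  set a : ℕ → ℝ := fun k => k * π / (2*n) with ha
  set t : ℕ → ℝ := fun k => Real.cos (a k) / ch n with ht
  have ha_mem : ∀ k, k ≤ 2*n → a k ∈ Set.Icc 0 π := by
    intro k hk
    have hkR : (k:ℝ) ≤ 2*n := by exact_mod_cast hk
    constructor
    · positivity
    · rw [div_le_iff₀ (by positivity)]
      nlinarith
  have ha_lt : ∀ i j, i < j → a i < a j := by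
    intro i j hij
    have : (i:ℝ) < j := by exact_mod_cast hij
    have h2n : (0:ℝ) < 2*n := by positivity
    apply div_lt_div_of_pos_right ?_ h2n
    nlinarith
  have ht_anti : ∀ i j, i < j → j ≤ 2*n → t j < t i := by
    intro i j hij hj
    apply div_lt_div_of_pos_right ?_ hc
    exact Real.strictAntiOn_cos (ha_mem i (by omega)) (ha_mem j hj) (ha_lt i j hij)
  have ht_anti_le : ∀ i j, i ≤ j → j ≤ 2*n → t j ≤ t i := by
    intro i j hij hj
    rcases eq_or_lt_of_le hij with h | h
    · rw [h]
    · exact le_of_lt (ht_anti i j h hj)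
  -- t k in (-1,1) for 1 ≤ k ≤ 2n-1
  have ht_mem : ∀ k, 1 ≤ k → k ≤ 2*n-1 → t k ∈ Set.Ioo (-1:ℝ) 1 := by
    intro k h1 h2
    have hkR : (1:ℝ) ≤ (k:ℝ) := by exact_mod_cast h1
    have hkR2 : (k:ℝ) ≤ 2*n-1 := by
      have : (k:ℝ) ≤ ((2*n-1 : ℕ) : ℝ) := by exact_mod_cast h2
      rw [Nat.cast_sub (by omega)] at this
      push_cast at this
      linarith
    have hmem := ha_mem k (by omega)
    have h4n : π/(4*(n:ℝ)) ∈ Set.Icc 0 π := by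
      constructor
      · positivity
      · rw [div_le_iff₀ (by positivity)]
        nlinarith
    have hpin : π - π/(4*(n:ℝ)) ∈ Set.Icc 0 π := by
      obtain ⟨u1, u2⟩ := h4n
      constructor <;> linarith
    have hlt1 : π/(4*(n:ℝ)) < a k := by
      show π/(4*(n:ℝ)) < k * π / (2*n)
      rw [div_lt_div_iff₀ (by positivity) (by positivity)]
      have hp : (0:ℝ) < π * (n:ℝ) := by positivity
      nlinarith [mul_le_mul_of_nonneg_right hkR (le_of_lt (show (0:ℝ) < π*(4*n) by positivity))]
    have hlt2 : a k < π - π/(4*(n:ℝ)) := by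
      show (k:ℝ) * π / (2*n) < π - π/(4*(n:ℝ))
      rw [div_lt_iff₀ (by positivity : (0:ℝ) < 2*n)]
      have hhalf : π/(4*(n:ℝ))*(2*n) = π/2 := by field_simp; ring
      nlinarith [mul_le_mul_of_nonneg_right hkR2 Real.pi_pos.le]
    have hcos1 : Real.cos (a k) < ch n := by
      rw [chdef]
      exact Real.strictAntiOn_cos h4n hmem hlt1
    have hcos2 : -ch n < Real.cos (a k) := by
      have := Real.strictAntiOn_cos hmem hpin hlt2
      rw [Real.cos_pi_sub, ← chdef] at this
      linarith
    constructor
    · show -1 < Real.cos (a k) / ch n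
      rw [lt_div_iff₀ hc]
      linarith
    · show Real.cos (a k) / ch n < 1
      rw [div_lt_one hc]
      exact hcos1
  -- value of P at nodes
  have hPt : ∀ k : ℕ, (Pc n).eval (t k) = -(Mc n) * (-1:ℝ)^k := by
    intro k
    rw [Pc_eval]
    have hct : ch n * t k = Real.cos (a k) := by
      show ch n * (Real.cos (a k) / ch n) = Real.cos (a k)
      field_simp
    rw [hct, Chebyshev.T_real_cos]
    push_cast
    have harg : 2 * (n:ℝ) * a k = (k:ℝ) * π := by
      show 2 * (n:ℝ) * ((k:ℝ) * π / (2*n)) = (k:ℝ) * π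
      have : (n:ℝ) ≠ 0 := by positivity
      field_simp
    rw [harg]
    have : Real.cos ((k:ℝ) * π) = (-1:ℝ)^k := by
      have := Real.cos_nat_mul_pi_sub 0 k
      simpa using this
    rw [this]
  -- sign of D at nodes
  have hDsign : ∀ k : ℕ, 1 ≤ k → k ≤ 2*n-1 → 0 < (-1:ℝ)^(k+1) * (D.eval (t k)) := by
    intro k h1 h2
    have htk := ht_mem k h1 h2
    have hfk := hfle (t k) (Set.mem_Icc_of_Ioo htk)
    have hDev : D.eval (t k) = (Mc n) * (-1:ℝ)^(k+1) - (1 - (t k)^2) * q.eval (t k) := by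
      rw [hD]
      simp only [eval_sub, eval_mul, eval_one, eval_pow, eval_X, hPt k]
      ring
    set g := (1 - (t k)^2) * q.eval (t k) with hg
    have hgabs : |g| < Mc n := hfk
    have hsq : ((-1:ℝ)^(k+1)) * ((-1:ℝ)^(k+1)) = 1 := by
      rw [← pow_add]
      exact (neg_one_pow_eq_one_iff_even (by norm_num)).mpr ⟨k+1, by ring⟩
    have habs1 : |(-1:ℝ)^(k+1)| = 1 := by
      rw [abs_pow, abs_neg, abs_one, one_pow]
    have hkey : (-1:ℝ)^(k+1) * g ≤ |g| := by
      calc (-1:ℝ)^(k+1) * g ≤ |(-1:ℝ)^(k+1) * g| := le_abs_self _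
      _ = |g| := by rw [abs_mul, habs1, one_mul]
    rw [hDev]
    have : (-1:ℝ)^(k+1) * ((Mc n) * (-1:ℝ)^(k+1) - g) = Mc n - (-1:ℝ)^(k+1)*g := by
      rw [mul_sub]
      rw [show (-1:ℝ)^(k+1) * ((Mc n) * (-1:ℝ)^(k+1)) = Mc n * ((-1:ℝ)^(k+1) * (-1:ℝ)^(k+1)) by ring, hsq]
      ring
    rw [this]
    have : |g| < Mc n := hgabs
    linarith [hkey]
  have hDcont : Continuous fun x => D.eval x := D.continuous_aeval
  -- roots between consecutive nodes
  have hroot : ∀ k : ℕ, 1 ≤ k → k ≤ 2*n-2 → ∃ r ∈ Set.Ioo (t (k+1)) (t k), D.eval r = 0 := by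
    intro k h1 h2
    have hs1 := hDsign k h1 (by omega)
    have hs2 := hDsign (k+1) (by omega) (by omega)
    have hab : t (k+1) < t k := ht_anti k (k+1) (by omega) (by omega)
    have hflip : ((-1:ℝ)^(k+1+1)) = -((-1:ℝ)^(k+1)) := by ring
    rcases Nat.even_or_odd k with he | ho
    · -- k even : (-1)^(k+1) = -1, D(t k) < 0 < D(t (k+1))
      have h1' : ((-1:ℝ)^(k+1)) = -1 := by
        rw [pow_succ, he.neg_one_pow, one_mul]
      rw [h1'] at hs1
      rw [hflip, h1'] at hs2
      have hd1 : D.eval (t k) < 0 := by linarith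
      have hd2 : 0 < D.eval (t (k+1)) := by linarith
      obtain ⟨r, hr1, hr2⟩ := intermediate_value_Ioo' (le_of_lt hab) hDcont.continuousOn
        (show (0:ℝ) ∈ Set.Ioo (D.eval (t k)) (D.eval (t (k+1))) from ⟨hd1, hd2⟩)
      exact ⟨r, hr1, hr2⟩
    · have h1' : ((-1:ℝ)^(k+1)) = 1 := by
        rw [pow_succ]
        rcases ho with ⟨m, hm⟩
        subst hm
        rw [show 2*m+1 = 2*m+1 from rfl, pow_succ, (even_two_mul m).neg_one_pow]
        ring
      rw [h1'] at hs1
      rw [hflip, h1'] at hs2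
      have hd1 : 0 < D.eval (t k) := by linarith
      have hd2 : D.eval (t (k+1)) < 0 := by linarith
      obtain ⟨r, hr1, hr2⟩ := intermediate_value_Ioo (le_of_lt hab) hDcont.continuousOn
        (show (0:ℝ) ∈ Set.Ioo (D.eval (t (k+1))) (D.eval (t k)) from ⟨hd2, hd1⟩)
      exact ⟨r, hr1, hr2⟩
  -- choose roots
  have H : ∀ k : ℕ, ∃ rr : ℝ, 1 ≤ k → k ≤ 2*n-2 → rr ∈ Set.Ioo (t (k+1)) (t k) ∧ D.eval rr = 0 := by
    intro k
    by_cases hk : 1 ≤ k ∧ k ≤ 2*n-2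
    · obtain ⟨rr, h1, h2⟩ := hroot k hk.1 hk.2
      exact ⟨rr, fun _ _ => ⟨h1, h2⟩⟩
    · exact ⟨0, fun ha hb => absurd ⟨ha, hb⟩ hk⟩
  choose r hr using H
  have hD1 := hDsign 1 le_rfl (by omega)
  have hDne : D ≠ 0 := by
    intro h0
    rw [h0] at hD1; simp at hD1
  have hrmem : ∀ k, 1 ≤ k → k ≤ 2*n-2 → r k ∈ Set.Ioo (t (k+1)) (t k) :=
    fun k h1 h2 => (hr k h1 h2).1
  have horder : ∀ i j, 1 ≤ i → j ≤ 2*n-2 → i < j → r j < r i := by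
    intro i j h1 h2 hij
    have hrj := hrmem j (by omega) h2
    have hri := hrmem i h1 (by omega)
    have hmid : t j ≤ t (i+1) := ht_anti_le (i+1) j (by omega) (by omega)
    calc r j < t j := hrj.2
    _ ≤ t (i+1) := hmid
    _ < r i := hri.1
  have hinj : Set.InjOn r ↑(Finset.Icc 1 (2*n-2)) := by
    intro i hi j hj heq
    simp only [Finset.coe_Icc, Set.mem_Icc] at hi hj
    by_contra hne
    rcases Nat.lt_or_ge i j with h | h
    · exact absurd heq (ne_of_gt (horder i j hi.1 hj.2 h))
    · have h' : j < i := by omega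
      exact absurd heq (ne_of_lt (horder j i hj.1 hi.2 h'))
  have hrIoo : ∀ k, 1 ≤ k → k ≤ 2*n-2 → r k ∈ Set.Ioo (-1:ℝ) 1 := by
    intro k h1 h2
    have hrk := hrmem k h1 h2
    have h1' := ht_mem k h1 (by omega)
    have h2' := ht_mem (k+1) (by omega) (by omega)
    exact ⟨lt_trans h2'.1 hrk.1, lt_trans hrk.2 h1'.2⟩
  set S₀ : Finset ℝ := insert (-1:ℝ) (insert (1:ℝ) ((Finset.Icc 1 (2*n-2)).image r)) with hS₀
  have hcard_im : ((Finset.Icc 1 (2*n-2)).image r).card = 2*n-2 := by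
    rw [Finset.card_image_of_injOn hinj, Nat.card_Icc]; omega
  have h1nm : (1:ℝ) ∉ (Finset.Icc 1 (2*n-2)).image r := by
    intro hmem
    obtain ⟨k, hk, hk2⟩ := Finset.mem_image.mp hmem
    rw [Finset.mem_Icc] at hk
    have := hrIoo k hk.1 hk.2
    rw [hk2] at this
    exact lt_irrefl 1 this.2
  have hm1nm : (-1:ℝ) ∉ insert (1:ℝ) ((Finset.Icc 1 (2*n-2)).image r) := by
    intro hmem
    rcases Finset.mem_insert.mp hmem with h | h
    · norm_num at h
    · obtain ⟨k, hk, hk2⟩ := Finset.mem_image.mp h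
      rw [Finset.mem_Icc] at hk
      have := hrIoo k hk.1 hk.2
      rw [hk2] at this
      exact lt_irrefl (-1) this.1
  have hcardS : S₀.card = 2*n := by
    rw [hS₀, Finset.card_insert_of_notMem hm1nm, Finset.card_insert_of_notMem h1nm, hcard_im]
    omega
  have heval1 : D.eval 1 = 0 := by
    rw [hD]
    simp [Pc_root_one hn1]
  have hevalm1 : D.eval (-1) = 0 := by
    rw [hD]
    simp [Pc_root_neg_one hn1]
  have hsub : S₀ ⊆ D.roots.toFinset := by
    intro x hx
    rw [Multiset.mem_toFinset, mem_roots hDne]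
    rw [hS₀, Finset.mem_insert, Finset.mem_insert] at hx
    rcases hx with h | h | h
    · rw [h]; exact hevalm1
    · rw [h]; exact heval1
    · obtain ⟨k, hk, hk2⟩ := Finset.mem_image.mp h
      rw [Finset.mem_Icc] at hk
      rw [← hk2]
      exact (hr k hk.1 hk.2).2
  have hq0 : q ≠ 0 := hm.ne_zero
  have hdeg2 : ((1 - X^2 : ℝ[X]) * q).natDegree = 2*n := by
    rw [natDegree_mul one_sub_X2_ne_zero hq0, one_sub_X2_natDegree, hd]
    omega
  have hco : D.coeff (2*n) = 0 := by
    rw [hD, coeff_sub]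
    have e1 : (Pc n).coeff (2*n) = -1 := by
      have := Pc_leadingCoeff hn1
      rwa [leadingCoeff, Pc_natDegree hn1] at this
    have e2 : ((1 - X^2 : ℝ[X]) * q).coeff (2*n) = -1 := by
      have hlc2 : ((1 - X^2 : ℝ[X]) * q).leadingCoeff = -1 := by
        rw [leadingCoeff_mul, one_sub_X2_leadingCoeff, hm.leadingCoeff, mul_one]
      rwa [leadingCoeff, hdeg2] at hlc2
    rw [e1, e2]
    ring
  have hDle : D.natDegree ≤ 2*n := by
    rw [hD]
    exact le_trans (natDegree_sub_le _ _) (by rw [Pc_natDegree hn1, hdeg2]; omega)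
  have hDne2n : D.natDegree ≠ 2*n := by
    intro hcontr
    apply hDne
    rw [← leadingCoeff_eq_zero, leadingCoeff, hcontr]
    exact hco
  have hc1' := Finset.card_le_card hsub
  have hc2' := Multiset.toFinset_card_le D.roots
  have hc3' := D.card_roots'
  omega
lemma Pc_q0 {n : ℕ} (hn : 1 ≤ n) :
    ∃ q₀ : ℝ[X], q₀.Monic ∧ q₀.natDegree = 2*n-2 ∧ Pc n = (1 - X^2) * q₀ := by
  obtain ⟨q₀, hq⟩ := Pc_factor hn
  have hPne : Pc n ≠ 0 := fun h => by
    have := Pc_leadingCoeff hn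
    rw [h] at this
    simp at this
  have hq0ne : q₀ ≠ 0 := fun h => by
    rw [h, mul_zero] at hq
    exact hPne hq
  have hdeg : q₀.natDegree = 2*n-2 := by
    have := Pc_natDegree hn
    rw [hq, natDegree_mul one_sub_X2_ne_zero hq0ne, one_sub_X2_natDegree] at this
    omega
  have hlc : q₀.leadingCoeff = 1 := by
    have := Pc_leadingCoeff hn
    rw [hq, leadingCoeff_mul, one_sub_X2_leadingCoeff] at this
    linarith
  exact ⟨q₀, hlc, hdeg, hq⟩

end ConstrainedCheb

open ConstrainedCheb

/-- For every integer `n ≥ 2` and every monic real polynomial `q` of degree `2n-2`,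
`sup_{t ∈ [-1,1]} |(1-t²) q(t)| ≥ 2^{1-2n} / cos^{2n}(π/(4n))`. Moreover the function
`t ↦ -2^{1-2n} cos^{-2n}(π/(4n)) · T_{2n}(cos(π/(4n)) t)` equals `(1-t²) q₀(t)` for a
monic polynomial `q₀` of degree `2n-2`, and its sup norm on `[-1,1]` equals exactly
`2^{1-2n} / cos^{2n}(π/(4n))`. -/
theorem constrained_chebyshev_minimal (n : ℕ) (hn : 2 ≤ n) :
    (∀ q : ℝ[X], q.Monic → q.natDegree = 2 * n - 2 →
      (2:ℝ) ^ (1 - 2 * (n:ℤ)) / Real.cos (π / (4 * n)) ^ (2 * n) ≤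
        sSup ((fun t => |(1 - t ^ 2) * q.eval t|) '' Set.Icc (-1:ℝ) 1)) ∧
    ∃ q₀ : ℝ[X], q₀.Monic ∧ q₀.natDegree = 2 * n - 2 ∧
      (∀ t : ℝ,
        -((2:ℝ) ^ (1 - 2 * (n:ℤ)) / Real.cos (π / (4 * n)) ^ (2 * n)) *
            (Polynomial.Chebyshev.T ℝ (2 * n)).eval (Real.cos (π / (4 * n)) * t) =
          (1 - t ^ 2) * q₀.eval t) ∧
      sSup ((fun t => |(1 - t ^ 2) * q₀.eval t|) '' Set.Icc (-1:ℝ) 1) =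
        (2:ℝ) ^ (1 - 2 * (n:ℤ)) / Real.cos (π / (4 * n)) ^ (2 * n) := by
  have hn1 : 1 ≤ n := by omega
  have hMc : (2:ℝ) ^ (1 - 2 * (n:ℤ)) / Real.cos (π / (4 * n)) ^ (2 * n) = Mc n := rfl
  have hch : Real.cos (π / (4 * n)) = ch n := rfl
  rw [hMc]
  constructor
  · exact fun q hm hd => lower hn q hm hd
  · obtain ⟨q₀, hq1, hq2, hq3⟩ := Pc_q0 hn1
    refine ⟨q₀, hq1, hq2, ?_, ?_⟩
    · intro t
      rw [hch, ← Pc_eval t, hq3]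
      simp [eval_mul]
    · exact (sup_greatest hn1 q₀ hq3).csSup_eq
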